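/- Let H be a Hermitian matrix, v a unit vector, λ ∈ ℝ, ε > 0, and w a unit vector orthogonal to v with H v = λ v + ε w. Suppose H has exactly one eigenvalue λ_ε (counted with multiplicity) satisfying |λ − λ_ε| ≤ ε, and all other eigenvalues of H are at distance at least d > ε from λ. Then any unit eigenvector v_ε of H associated with λ_ε satisfies ‖v_ε − P_v(v_ε)‖₂ ≤ 2ε/(d − ε), where P_v denotes orthogonal projection onto the span of v. -/

import Mathlib

set_option maxHeartbeats 1000000 in
/-- Perturbation of eigenvectors (Benaych-Georges, Péché): if `H v = λ v + ε w` with `v ⊥ w`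
unit vectors, `H` has exactly one eigenvalue `λ_ε` (with multiplicity) within `ε` of `λ`,
and all other eigenvalues are at distance at least `d > ε` from `λ`, then any unit
eigenvector `vε` for `λ_ε` satisfies `‖vε − P_v vε‖ ≤ 2ε/(d − ε)`. -/
theorem eigenvector_perturbation {n : ℕ} (H : Matrix (Fin n) (Fin n) ℂ)
    (hH : H.IsHermitian) (v w : EuclideanSpace ℂ (Fin n)) (lam ε d : ℝ)
    (hε : 0 < ε) (hd : ε < d)
    (hv : ‖v‖ = 1) (hw : ‖w‖ = 1) (hvw : (inner ℂ v w : ℂ) = 0)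
    (heq : Matrix.toEuclideanCLM (𝕜 := ℂ) H v = (lam : ℂ) • v + (ε : ℂ) • w)
    (i₀ : Fin n) (hi₀ : |lam - hH.eigenvalues i₀| ≤ ε)
    (hunique : ∀ j : Fin n, j ≠ i₀ → d ≤ |lam - hH.eigenvalues j|)
    (vε : EuclideanSpace ℂ (Fin n)) (hvε : ‖vε‖ = 1)
    (heig : Matrix.toEuclideanCLM (𝕜 := ℂ) H vε = (hH.eigenvalues i₀ : ℂ) • vε) :
    ‖vε - (inner ℂ v vε : ℂ) • v‖ ≤ 2 * ε / (d - ε) := by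
  classical
  set B := hH.eigenvectorBasis with hBdef
  set μ := hH.eigenvalues with hμdef
  have hd0 : (0:ℝ) < d := lt_trans hε hd
  have hsymm : (Matrix.toEuclideanLin H).IsSymmetric :=
    Matrix.isHermitian_iff_isSymmetric.mp hH
  have hCLM : ∀ x : EuclideanSpace ℂ (Fin n),
      Matrix.toEuclideanCLM (𝕜 := ℂ) H x = Matrix.toEuclideanLin H x := by
    intro x
    rw [← Matrix.coe_toEuclideanCLM_eq_toEuclideanLin]
    rfl
  have hBj : ∀ j, Matrix.toEuclideanLin H (B j) = (μ j : ℂ) • B j := by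
    intro j
    have h1 := hH.mulVec_eigenvectorBasis j
    apply (WithLp.equiv 2 (Fin n → ℂ)).injective
    rw [WithLp.equiv_apply, Matrix.piLp_ofLp_toEuclideanLin]
    ext i
    have := congrFun h1 i
    simpa [Matrix.toLin'_apply, Complex.real_smul] using this
  -- coordinates
  set a : Fin n → ℂ := fun j => B.repr v j with hadef
  set b : Fin n → ℂ := fun j => B.repr w j with hbdef
  set x : Fin n → ℂ := fun j => B.repr vε j with hxdef
  have key : ∀ (y : EuclideanSpace ℂ (Fin n)) (j : Fin n),
      B.repr (Matrix.toEuclideanCLM (𝕜 := ℂ) H y) j = (μ j : ℂ) * B.repr y j := by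
    intro y j
    rw [hCLM, B.repr_apply_apply, B.repr_apply_apply, ← hsymm (B j) y, hBj j,
      inner_smul_left]
    simp [Complex.conj_ofReal]
  -- eigen-relation for v in coordinates
  have hrel : ∀ j, ((μ j : ℂ) - lam) * a j = (ε : ℂ) * b j := by
    intro j
    have h1 := key v j
    rw [heq] at h1
    simp only [map_add, map_smul, PiLp.add_apply, PiLp.smul_apply, smul_eq_mul] at h1
    show ((μ j : ℂ) - lam) * B.repr v j = (ε : ℂ) * B.repr w j
    linear_combination -h1
  -- vε coordinates vanish off i₀
  have hxz : ∀ j, j ≠ i₀ → x j = 0 := by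
    intro j hj
    have h1 := key vε j
    rw [heig] at h1
    simp only [map_smul, PiLp.smul_apply, smul_eq_mul] at h1
    have hne : (μ j : ℂ) ≠ (μ i₀ : ℂ) := by
      simp only [ne_eq, Complex.ofReal_inj]
      intro hcontra
      have := hunique j hj
      rw [hcontra] at this
      linarith [le_trans this hi₀ ]
    have h2 : ((μ j : ℂ) - (μ i₀ : ℂ)) * x j = 0 := by
      show ((μ j : ℂ) - (μ i₀ : ℂ)) * B.repr vε j = 0
      linear_combination -h1
    rcases mul_eq_zero.mp h2 with h | h
    · exact absurd (sub_eq_zero.mp h) hne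
    · exact h
  -- Parseval sums
  have hsuma : ∑ j, ‖a j‖ ^ 2 = 1 := by
    have h1 : ‖B.repr v‖ = 1 := by rw [LinearIsometryEquiv.norm_map]; exact hv
    have h2 := EuclideanSpace.norm_eq (B.repr v)
    rw [h1] at h2
    have h3 : Real.sqrt (∑ j, ‖B.repr v j‖ ^ 2) = 1 := h2.symm
    have := congrArg (· ^ 2) h3
    simpa [Real.sq_sqrt (Finset.sum_nonneg fun j _ => sq_nonneg _)] using this
  have hsumb : ∑ j, ‖b j‖ ^ 2 = 1 := by
    have h1 : ‖B.repr w‖ = 1 := by rw [LinearIsometryEquiv.norm_map]; exact hw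
    have h2 := EuclideanSpace.norm_eq (B.repr w)
    rw [h1] at h2
    have h3 : Real.sqrt (∑ j, ‖B.repr w j‖ ^ 2) = 1 := h2.symm
    have := congrArg (· ^ 2) h3
    simpa [Real.sq_sqrt (Finset.sum_nonneg fun j _ => sq_nonneg _)] using this
  have hsumx : ∑ j, ‖x j‖ ^ 2 = 1 := by
    have h1 : ‖B.repr vε‖ = 1 := by rw [LinearIsometryEquiv.norm_map]; exact hvε
    have h2 := EuclideanSpace.norm_eq (B.repr vε)
    rw [h1] at h2
    have h3 : Real.sqrt (∑ j, ‖B.repr vε j‖ ^ 2) = 1 := h2.symm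
    have := congrArg (· ^ 2) h3
    simpa [Real.sq_sqrt (Finset.sum_nonneg fun j _ => sq_nonneg _)] using this
  have hxi₀ : ‖x i₀‖ = 1 := by
    have : ∑ j, ‖x j‖ ^ 2 = ‖x i₀‖ ^ 2 := by
      rw [Finset.sum_eq_single i₀]
      · intro j _ hj; rw [hxz j hj]; simp
      · intro h; exact absurd (Finset.mem_univ i₀) h
    rw [this] at hsumx
    nlinarith [norm_nonneg (x i₀)]
  -- bound on off-i₀ coordinates of v
  have habound : ∀ j, j ≠ i₀ → ‖a j‖ ^ 2 ≤ (ε / d) ^ 2 * ‖b j‖ ^ 2 := by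
    intro j hj
    have h1 := hrel j
    have h2 := congrArg norm h1
    rw [norm_mul, norm_mul] at h2
    have h3 : ‖((μ j : ℂ) - lam)‖ = |μ j - lam| := by
      rw [show ((μ j : ℂ) - (lam : ℂ)) = ((μ j - lam : ℝ) : ℂ) by push_cast; ring,
        Complex.norm_real, Real.norm_eq_abs]
    have h4 : ‖((ε : ℝ) : ℂ)‖ = ε := by
      rw [Complex.norm_real, Real.norm_eq_abs, abs_of_pos hε]
    rw [h3, h4] at h2
    have h5 : d ≤ |μ j - lam| := by rw [abs_sub_comm]; exact hunique j hj
    have h6 : d * ‖a j‖ ≤ ε * ‖b j‖ := by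
      calc d * ‖a j‖ ≤ |μ j - lam| * ‖a j‖ :=
            mul_le_mul_of_nonneg_right h5 (norm_nonneg _)
        _ = ε * ‖b j‖ := h2
    have h7 : ‖a j‖ ≤ (ε / d) * ‖b j‖ := by
      rw [div_mul_eq_mul_div, le_div_iff₀ hd0]
      calc ‖a j‖ * d = d * ‖a j‖ := by ring
        _ ≤ ε * ‖b j‖ := h6
    calc ‖a j‖ ^ 2 ≤ ((ε / d) * ‖b j‖) ^ 2 := by
          apply pow_le_pow_left₀ (norm_nonneg _) h7
      _ = (ε / d) ^ 2 * ‖b j‖ ^ 2 := by ring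
  -- the inner product in coordinates
  set c : ℂ := inner ℂ v vε with hcdef
  have hcval : c = (starRingEnd ℂ) (a i₀) * x i₀ := by
    have h1 : (inner ℂ (B.repr v) (B.repr vε) : ℂ) = c := B.repr.inner_map_map v vε
    rw [← h1, PiLp.inner_apply]
    rw [Finset.sum_eq_single i₀]
    · show _ = (starRingEnd ℂ) ((B.repr v).ofLp i₀) * (B.repr vε).ofLp i₀
      rw [RCLike.inner_apply]; ring
    · intro j _ hj; rw [show (B.repr vε) j = x j from rfl, hxz j hj]; simp
    · intro h; exact absurd (Finset.mem_univ i₀) h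
  have hcnorm : ‖c‖ = ‖a i₀‖ := by
    rw [hcval, norm_mul, RCLike.norm_conj, hxi₀, mul_one]
  -- bound 1 - ‖c‖² ≤ (ε/d)²
  have hbound : 1 - ‖c‖ ^ 2 ≤ (ε / d) ^ 2 := by
    have hsplit : ‖a i₀‖ ^ 2 + ∑ j ∈ Finset.univ.erase i₀, ‖a j‖ ^ 2 = 1 := by
      rw [← hsuma]
      exact Finset.add_sum_erase Finset.univ (fun j => ‖a j‖ ^ 2) (Finset.mem_univ i₀)
    have h1 : ∑ j ∈ Finset.univ.erase i₀, ‖a j‖ ^ 2 ≤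
        (ε / d) ^ 2 * ∑ j ∈ Finset.univ.erase i₀, ‖b j‖ ^ 2 := by
      rw [Finset.mul_sum]
      apply Finset.sum_le_sum
      intro j hj
      exact habound j (Finset.ne_of_mem_erase hj)
    have h2 : ∑ j ∈ Finset.univ.erase i₀, ‖b j‖ ^ 2 ≤ 1 := by
      rw [← hsumb]
      apply Finset.sum_le_sum_of_subset_of_nonneg (Finset.erase_subset _ _)
      intro j _ _; exact sq_nonneg _
    have h3 : (ε / d) ^ 2 * ∑ j ∈ Finset.univ.erase i₀, ‖b j‖ ^ 2 ≤ (ε / d) ^ 2 :=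
      by nlinarith [sq_nonneg (ε / d)]
    rw [hcnorm]
    linarith
  -- compute the norm
  have hnormsq : ‖vε - c • v‖ ^ 2 = 1 - ‖c‖ ^ 2 := by
    have hinner : (inner ℂ vε (c • v) : ℂ) = ((‖c‖ ^ 2 : ℝ) : ℂ) := by
      rw [inner_smul_right]
      have h1 : (inner ℂ vε v : ℂ) = (starRingEnd ℂ) c := by
        rw [hcdef, ← inner_conj_symm]
      rw [h1, Complex.mul_conj]
      rw [Complex.normSq_eq_norm_sq]
    have h2 := @norm_sub_sq ℂ _ _ _ _ vε (c • v)
    rw [hinner] at h2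
    rw [h2, hvε, norm_smul, hv]
    simp only [RCLike.re_to_complex, Complex.ofReal_re, mul_one, one_pow]
    ring
  have hfin : ‖vε - c • v‖ ≤ ε / d := by
    have h1 : ‖vε - c • v‖ ^ 2 ≤ (ε / d) ^ 2 := by rw [hnormsq]; exact hbound
    have h2 : (0:ℝ) ≤ ε / d := le_of_lt (div_pos hε hd0)
    calc ‖vε - c • v‖ = Real.sqrt (‖vε - c • v‖ ^ 2) :=
          (Real.sqrt_sq (norm_nonneg _)).symm
      _ ≤ Real.sqrt ((ε / d) ^ 2) := Real.sqrt_le_sqrt h1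
      _ = ε / d := Real.sqrt_sq h2
  have hstep : ε / d ≤ 2 * ε / (d - ε) := by
    rw [div_le_div_iff₀ hd0 (by linarith)]
    nlinarith
  calc ‖vε - c • v‖ ≤ ε / d := hfin
    _ ≤ 2 * ε / (d - ε) := hstep
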